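/- Let r, k ≥ 1, let ζ = e^{2πi/k} be a primitive k-th root of unity, and for j, c ∈ [k] let j ⊕ c denote the unique representative of j + c modulo k in [k]. Given an (r,k)-vector clump {ψ_{i,j}}_{i∈[r], j∈[k]} in ℂ^{rk}, define for i ∈ [r] and c₁, c₂ ∈ [k] the vector φ_{i,(c₁,c₂)} = k^{-1/2} Σ_{j=1}^k ζ^{c₁ j} e_j ⊗ ψ_{i, j⊕c₂} ∈ ℂ^k ⊗ ℂ^{rk} ≅ ℂ^{rk²}, where {e_j} is the standard basis of ℂ^k. Then: (a) ⟨φ_{i,(c₁,c₂)}, φ_{i',(c₁',c₂')}⟩ = δ_{i,i'} δ_{c₁,c₁'} δ_{c₂,c₂'}, so the rk² vectors φ_{i,(c₁,c₂)} form an orthonormal basis of ℂ^{rk²}; and (b) if {ψ'_{i,j}} is another (r,k)-clump orthogonal to {ψ_{i,j}}, and φ'_{i,(c₁,c₂)} are defined analogously from {ψ'_{i,j}}, then ⟨φ_{i,(c₁,c₂)}, φ'_{i',(c₁,c₂)}⟩ = 0 for all i, i' ∈ [r] and all c₁, c₂ ∈ [k]. -/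

import Mathlib

open scoped ComplexConjugate

/-- The standard (conjugate-linear in the first argument) inner product on `ι → ℂ`. -/
noncomputable def cdot {ι : Type} [Fintype ι] (x y : ι → ℂ) : ℂ :=
  ∑ i, conj (x i) * y i

/-- A `k`-dimensional (complex) orthogonal representation of a graph. -/
def IsOrthRep {V : Type} (G : SimpleGraph V) (k : ℕ) (ψ : V → Fin k → ℂ) : Prop :=
  (∀ v, cdot (ψ v) (ψ v) = 1) ∧ ∀ u v, G.Adj u v → cdot (ψ u) (ψ v) = 0

/-- The orthogonal rank `ξ(G)`: the least `k ≥ 1` admitting a `k`-dimensional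
orthogonal representation. -/
noncomputable def orthRank {V : Type} (G : SimpleGraph V) : ℕ :=
  sInf {k | 1 ≤ k ∧ ∃ ψ : V → Fin k → ℂ, IsOrthRep G k ψ}

/-- A quantum `k`-colouring of `G` on `ℂ^d`: projective measurements
`{E v c}_{c ∈ Fin k}` such that `E u c * E v c = 0` for adjacent `u, v`. -/
def IsQuantumColoring {V : Type} (G : SimpleGraph V) (k d : ℕ)
    (E : V → Fin k → Matrix (Fin d) (Fin d) ℂ) : Prop :=
  (∀ v c, (E v c).IsHermitian) ∧
  (∀ v c, E v c * E v c = E v c) ∧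
  (∀ v, ∑ c, E v c = 1) ∧
  ∀ u v, G.Adj u v → ∀ c, E u c * E v c = 0

/-- The quantum chromatic number `χ_q(G)`: the least `k ≥ 1` for which a quantum
`k`-colouring exists on `ℂ^d` for some `d ≥ 1`. -/
noncomputable def quantumChromaticNumber {V : Type} (G : SimpleGraph V) : ℕ :=
  sInf {k | 1 ≤ k ∧ ∃ d, 1 ≤ d ∧
    ∃ E : V → Fin k → Matrix (Fin d) (Fin d) ℂ, IsQuantumColoring G k d E}

/-- A rank-`r` quantum `k`-colouring: a quantum `k`-colouring on `ℂ^(r*k)` in which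
every projector has rank exactly `r`. -/
def IsRankRQuantumColoring {V : Type} (G : SimpleGraph V) (r k : ℕ)
    (E : V → Fin k → Matrix (Fin (r * k)) (Fin (r * k)) ℂ) : Prop :=
  IsQuantumColoring G k (r * k) E ∧ ∀ v c, (E v c).rank = r

/-- The rank-`r` quantum chromatic number `χ_q^{(r)}(G)`. -/
noncomputable def rankChromaticNumber {V : Type} (G : SimpleGraph V) (r : ℕ) : ℕ :=
  sInf {k | 1 ≤ k ∧ ∃ E : V → Fin k → Matrix (Fin (r * k)) (Fin (r * k)) ℂ,
    IsRankRQuantumColoring G r k E}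

/-- The chromatic number of `G` as a natural number: the least `k ≥ 1` for which a
proper `k`-colouring exists. -/
noncomputable def chromNat {V : Type} (G : SimpleGraph V) : ℕ :=
  sInf {k | 1 ≤ k ∧ G.Colorable k}

/-- The clique number `ω(G)`. -/
noncomputable def cliqueNum' {V : Type} (G : SimpleGraph V) : ℕ :=
  sSup {n | ∃ S : Finset V, G.IsNClique n S}

/-- An `(r,k)`-vector clump: `r*k` pairwise orthogonal unit vectors in `ℂ^(r*k)`. -/
def IsClump (r k : ℕ) (ψ : Fin r → Fin k → Fin (r * k) → ℂ) : Prop :=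
  ∀ i j i' j', cdot (ψ i j) (ψ i' j') = if i = i' ∧ j = j' then (1 : ℂ) else 0

/-- Orthogonality of two `(r,k)`-clumps. -/
def ClumpOrthogonal (r k : ℕ) (ψ φ : Fin r → Fin k → Fin (r * k) → ℂ) : Prop :=
  ∀ i i', ∑ j, cdot (ψ i j) (φ i' j) = 0

/-- An `(r,k)`-clump representation of `G`. -/
def IsClumpRep {V : Type} (G : SimpleGraph V) (r k : ℕ)
    (ψ : V → Fin r → Fin k → Fin (r * k) → ℂ) : Prop :=
  (∀ v, IsClump r k (ψ v)) ∧ ∀ u v, G.Adj u v → ClumpOrthogonal r k (ψ u) (ψ v)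

/-- The rank-`r` clump rank `ξ_c^{(r)}(G)`. -/
noncomputable def clumpRank {V : Type} (G : SimpleGraph V) (r : ℕ) : ℕ :=
  sInf {k | 1 ≤ k ∧ ∃ ψ, IsClumpRep G r k ψ}

/-- the Fourier-twisted vectors built from an `(r,k)`-clump form an
orthonormal basis of `ℂ^(r*k²)`, and the constructions associated to two
orthogonal clumps are orthogonal colour-block-wise. Here indices `j, c ∈ Fin k`
run over the residues modulo `k` and `j ⊕ c` is addition in `Fin k`. -/
lemma geom_orth (k : ℕ) (hk : 1 ≤ k) (ζ : ℂ) (hprim : IsPrimitiveRoot ζ k)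
    (c₁ c₁' : Fin k) :
    ∑ j : Fin k, (conj ζ) ^ ((c₁ : ℕ) * (j : ℕ)) * ζ ^ ((c₁' : ℕ) * (j : ℕ))
      = if c₁ = c₁' then (k : ℂ) else 0 := by
  have hζk : ζ ^ k = 1 := hprim.pow_eq_one
  have hζ0 : ζ ≠ 0 := fun h => by simp [h, zero_pow (by omega : k ≠ 0)] at hζk
  have hinv : ζ⁻¹ = ζ ^ (k - 1) := by
    have h1 : ζ ^ (k - 1) * ζ = 1 := by
      rw [← pow_succ, Nat.sub_add_cancel hk, hζk]
    exact (eq_inv_of_mul_eq_one_left h1).symm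
  have hconj : conj ζ = ζ⁻¹ := by
    have h2 : conj ζ * ζ = 1 := by
      have := hprim.norm'_eq_one (by omega : k ≠ 0)
      have h3 : Complex.normSq ζ = 1 := by
        have : ‖ζ‖ = 1 := this
        rw [← Complex.sq_norm, this]; norm_num
      rw [mul_comm, Complex.mul_conj, h3]; norm_num
    field_simp
    linear_combination h2
  set m : ℕ := (k - 1) * (c₁ : ℕ) + (c₁' : ℕ) with hm
  have hterm : ∀ j : Fin k,
      (conj ζ) ^ ((c₁ : ℕ) * (j : ℕ)) * ζ ^ ((c₁' : ℕ) * (j : ℕ)) = ζ ^ (m * (j : ℕ)) := by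
    intro j
    rw [hconj, hinv, ← pow_mul, ← pow_add]
    congr 1
    rw [hm]; ring
  rw [Finset.sum_congr rfl (fun j _ => hterm j)]
  simp_rw [pow_mul, Fin.sum_univ_eq_sum_range]
  have hdvd : k ∣ m ↔ c₁ = c₁' := by
    have hcast : ((m : ℕ) : ZMod k) = (c₁' : ℕ) - ((c₁ : ℕ) : ZMod k) := by
      have h3 : ((k - 1 : ℕ) : ZMod k) = -1 := by
        rw [Nat.cast_sub (by omega : 1 ≤ k)]
        simp [ZMod.natCast_self]
      push_cast [hm]
      rw [h3]; ring
    rw [← ZMod.natCast_eq_zero_iff, hcast]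
    rw [sub_eq_zero, eq_comm]
    rw [ZMod.natCast_eq_natCast_iff]
    constructor
    · intro h
      exact Fin.ext (h.eq_of_lt_of_lt c₁.isLt c₁'.isLt)
    · rintro rfl; rfl
  by_cases hc : c₁ = c₁'
  · have : ζ ^ m = 1 := hprim.pow_eq_one_iff_dvd m |>.2 (hdvd.2 hc)
    simp [this, hc]
  · have hne : ζ ^ m ≠ 1 := fun h => hc (hdvd.1 (hprim.pow_eq_one_iff_dvd m |>.1 h))
    have hpk : (ζ ^ m) ^ k = 1 := by rw [← pow_mul, mul_comm, pow_mul, hζk, one_pow]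
    rw [geom_sum_eq hne, hpk]
    simp [hc]

lemma cdot_phi_generic (r k : ℕ) (hk : 1 ≤ k) (ζ : ℂ)
    (f g : Fin r → Fin k → Fin (r * k) → ℂ)
    (φf φg : Fin r → Fin k → Fin k → (Fin k × Fin (r * k)) → ℂ)
    (hφf : ∀ i c₁ c₂ j x, φf i c₁ c₂ (j, x) =
      ((Real.sqrt k)⁻¹ : ℂ) * ζ ^ ((c₁ : ℕ) * (j : ℕ)) * f i (j + c₂) x)
    (hφg : ∀ i c₁ c₂ j x, φg i c₁ c₂ (j, x) =
      ((Real.sqrt k)⁻¹ : ℂ) * ζ ^ ((c₁ : ℕ) * (j : ℕ)) * g i (j + c₂) x)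
    (i i' : Fin r) (c₁ c₂ c₁' c₂' : Fin k) :
    cdot (φf i c₁ c₂) (φg i' c₁' c₂') = (k : ℂ)⁻¹ *
      ∑ j : Fin k, (conj ζ) ^ ((c₁ : ℕ) * (j : ℕ)) * ζ ^ ((c₁' : ℕ) * (j : ℕ)) *
        cdot (f i (j + c₂)) (g i' (j + c₂')) := by
  have hAA : ((Real.sqrt k : ℂ))⁻¹ * ((Real.sqrt k : ℂ))⁻¹ = (k : ℂ)⁻¹ := by
    rw [← mul_inv, ← Complex.ofReal_mul, Real.mul_self_sqrt (Nat.cast_nonneg k)]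
    norm_num
  unfold cdot
  rw [Fintype.sum_prod_type, Finset.mul_sum]
  refine Finset.sum_congr rfl fun j _ => ?_
  rw [Finset.mul_sum, Finset.mul_sum]
  refine Finset.sum_congr rfl fun x _ => ?_
  rw [hφf, hφg]
  simp only [map_mul, map_pow, map_inv₀, Complex.conj_ofReal]
  linear_combination ((conj ζ) ^ ((c₁ : ℕ) * (j : ℕ)) * ζ ^ ((c₁' : ℕ) * (j : ℕ)) *
    conj (f i (j + c₂) x) * g i' (j + c₂') x) * hAA

lemma cdot_sum_smul {ι κ : Type} [Fintype ι] [Fintype κ] (x : ι → ℂ) (g : κ → ℂ)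
    (v : κ → ι → ℂ) : cdot x (∑ p, g p • v p) = ∑ p, g p * cdot x (v p) := by
  unfold cdot
  simp only [Finset.sum_apply, Pi.smul_apply, smul_eq_mul, Finset.mul_sum]
  rw [Finset.sum_comm]
  exact Finset.sum_congr rfl fun p _ => Finset.sum_congr rfl fun i _ => by ring

theorem clump_fourier_orthonormal' (r k : ℕ) (hr : 1 ≤ r) (hk : 1 ≤ k)
    (ζ : ℂ) (hζ : ζ = Complex.exp (2 * (Real.pi : ℂ) * Complex.I / (k : ℂ)))
    (ψ ψ' : Fin r → Fin k → Fin (r * k) → ℂ)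
    (hψ : (∀ i j i' j', cdot (ψ i j) (ψ i' j') = if i = i' ∧ j = j' then (1 : ℂ) else 0))
    (hψ' : (∀ i j i' j', cdot (ψ' i j) (ψ' i' j') = if i = i' ∧ j = j' then (1 : ℂ) else 0))
    (horth : ∀ i i', ∑ j, cdot (ψ i j) (ψ' i' j) = 0)
    (φ φ' : Fin r → Fin k → Fin k → (Fin k × Fin (r * k)) → ℂ)
    (hφ : ∀ i c₁ c₂ j x, φ i c₁ c₂ (j, x) =
      ((Real.sqrt k)⁻¹ : ℂ) * ζ ^ ((c₁ : ℕ) * (j : ℕ)) * ψ i (j + c₂) x)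
    (hφ' : ∀ i c₁ c₂ j x, φ' i c₁ c₂ (j, x) =
      ((Real.sqrt k)⁻¹ : ℂ) * ζ ^ ((c₁ : ℕ) * (j : ℕ)) * ψ' i (j + c₂) x) :
    (∀ i i' c₁ c₂ c₁' c₂', cdot (φ i c₁ c₂) (φ i' c₁' c₂') =
      if i = i' ∧ c₁ = c₁' ∧ c₂ = c₂' then (1 : ℂ) else 0) ∧
    LinearIndependent ℂ (fun p : Fin r × Fin k × Fin k => φ p.1 p.2.1 p.2.2) ∧
    Submodule.span ℂ (Set.range (fun p : Fin r × Fin k × Fin k => φ p.1 p.2.1 p.2.2)) = ⊤ ∧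
    (∀ i i' c₁ c₂, cdot (φ i c₁ c₂) (φ' i' c₁ c₂) = 0) := by
  haveI : NeZero k := ⟨by omega⟩
  have hk0 : (k : ℂ) ≠ 0 := Nat.cast_ne_zero.2 (by omega)
  have hprim : IsPrimitiveRoot ζ k := hζ ▸ Complex.isPrimitiveRoot_exp k (by omega)
  have hζk : ζ ^ k = 1 := hprim.pow_eq_one
  have hcc : conj ζ * ζ = 1 := by
    have := hprim.norm'_eq_one (by omega : k ≠ 0)
    have h3 : Complex.normSq ζ = 1 := by
      have h4 : ‖ζ‖ = 1 := this
      rw [← Complex.sq_norm, h4]; norm_num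
    rw [mul_comm, Complex.mul_conj, h3]; norm_num
  -- (a)
  have claimA : ∀ i i' c₁ c₂ c₁' c₂', cdot (φ i c₁ c₂) (φ i' c₁' c₂') =
      if i = i' ∧ c₁ = c₁' ∧ c₂ = c₂' then (1 : ℂ) else 0 := by
    intro i i' c₁ c₂ c₁' c₂'
    rw [cdot_phi_generic r k hk ζ ψ ψ φ φ hφ hφ i i' c₁ c₂ c₁' c₂']
    by_cases hii : i = i' ∧ c₂ = c₂'
    · obtain ⟨rfl, rfl⟩ := hii
      have : ∀ j : Fin k, cdot (ψ i (j + c₂)) (ψ i (j + c₂)) = 1 := by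
        intro j; rw [hψ]; simp
      simp_rw [this, mul_one]
      rw [geom_orth k hk ζ hprim c₁ c₁']
      by_cases hc : c₁ = c₁'
      · simp [hc, inv_mul_cancel₀ hk0]
      · simp [hc]
    · have : ∀ j : Fin k, cdot (ψ i (j + c₂)) (ψ i' (j + c₂')) = 0 := by
        intro j; rw [hψ]
        rw [if_neg]
        rintro ⟨rfl, h2⟩
        exact hii ⟨rfl, add_left_cancel h2⟩
      simp_rw [this, mul_zero]
      rw [if_neg (fun h => hii ⟨h.1, h.2.2⟩)]
      simp
  -- linear independence
  have hli : LinearIndependent ℂ (fun p : Fin r × Fin k × Fin k => φ p.1 p.2.1 p.2.2) := by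
    rw [Fintype.linearIndependent_iff]
    intro g hg p
    have h1 := congrArg (cdot (φ p.1 p.2.1 p.2.2)) hg
    rw [cdot_sum_smul] at h1
    have h2 : ∀ q : Fin r × Fin k × Fin k,
        cdot (φ p.1 p.2.1 p.2.2) (φ q.1 q.2.1 q.2.2) = if p = q then 1 else 0 := by
      intro q
      rw [claimA]
      by_cases h : p = q
      · subst h; simp
      · rw [if_neg, if_neg h]
        rintro ⟨h1, h2, h3⟩
        exact h (Prod.ext h1 (Prod.ext h2 h3))
    simp_rw [h2, mul_ite, mul_one, mul_zero, Finset.sum_ite_eq, Finset.mem_univ,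
      if_true] at h1
    simpa [cdot] using h1
  refine ⟨claimA, hli, ?_, ?_⟩
  -- span
  · haveI : Nonempty (Fin r × Fin k × Fin k) := by
      refine ⟨⟨⟨0, by omega⟩, ⟨0, by omega⟩, ⟨0, by omega⟩⟩⟩
    refine hli.span_eq_top_of_card_eq_finrank ?_
    simp [Module.finrank_fintype_fun_eq_card]
    ring
  -- (d)
  · intro i i' c₁ c₂
    rw [cdot_phi_generic r k hk ζ ψ ψ' φ φ' hφ hφ' i i' c₁ c₂ c₁ c₂]
    have hone : ∀ j : Fin k, (conj ζ) ^ ((c₁ : ℕ) * (j : ℕ)) * ζ ^ ((c₁ : ℕ) * (j : ℕ)) = 1 := by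
      intro j; rw [← mul_pow, hcc, one_pow]
    simp_rw [mul_assoc, ← mul_assoc ((conj ζ) ^ _), hone, one_mul]
    have hre : ∑ j : Fin k, cdot (ψ i (j + c₂)) (ψ' i' (j + c₂)) =
        ∑ j : Fin k, cdot (ψ i j) (ψ' i' j) :=
      Fintype.sum_equiv (Equiv.addRight c₂) _ _ (fun j => rfl)
    rw [hre, horth, mul_zero]

theorem clump_fourier_orthonormal (r k : ℕ) (hr : 1 ≤ r) (hk : 1 ≤ k)
    (ζ : ℂ) (hζ : ζ = Complex.exp (2 * (Real.pi : ℂ) * Complex.I / (k : ℂ)))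
    (ψ ψ' : Fin r → Fin k → Fin (r * k) → ℂ)
    (hψ : IsClump r k ψ) (hψ' : IsClump r k ψ')
    (horth : ClumpOrthogonal r k ψ ψ')
    (φ φ' : Fin r → Fin k → Fin k → (Fin k × Fin (r * k)) → ℂ)
    (hφ : ∀ i c₁ c₂ j x, φ i c₁ c₂ (j, x) =
      ((Real.sqrt k)⁻¹ : ℂ) * ζ ^ ((c₁ : ℕ) * (j : ℕ)) * ψ i (j + c₂) x)
    (hφ' : ∀ i c₁ c₂ j x, φ' i c₁ c₂ (j, x) =
      ((Real.sqrt k)⁻¹ : ℂ) * ζ ^ ((c₁ : ℕ) * (j : ℕ)) * ψ' i (j + c₂) x) :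
    (∀ i i' c₁ c₂ c₁' c₂', cdot (φ i c₁ c₂) (φ i' c₁' c₂') =
      if i = i' ∧ c₁ = c₁' ∧ c₂ = c₂' then (1 : ℂ) else 0) ∧
    LinearIndependent ℂ (fun p : Fin r × Fin k × Fin k => φ p.1 p.2.1 p.2.2) ∧
    Submodule.span ℂ (Set.range (fun p : Fin r × Fin k × Fin k => φ p.1 p.2.1 p.2.2)) = ⊤ ∧
    (∀ i i' c₁ c₂, cdot (φ i c₁ c₂) (φ' i' c₁ c₂) = 0) := by
  exact clump_fourier_orthonormal' r k hr hk ζ hζ ψ ψ' hψ hψ' horth φ φ' hφ hφ'
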